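/- Suppose f : ℝ^m → ℝ^m is bounded by M_f and Lipschitz with constant L_f, g : ℝ → ℝ^m is continuous and bounded by M_g, ‖e^{At}‖ ≤ K e^{-ωt} for t ≥ 0, τ > 0, and ω - 2K L_f e^{ωτ/2} > 0. Then there exists a unique bounded continuous function φ : ℝ → ℝ^m satisfying φ(t) = ∫_{-∞}^t e^{A(t-s)} [f(φ(s-τ)) + g(s)] ds for all t, and it satisfies sup_t ‖φ(t)‖ ≤ K(M_f + M_g)/ω. -/

import Mathlib

open MeasureTheory

open scoped BoundedContinuousFunction

section Aux
open Set

/-- Substitution `s = t - u` in an integral over `Iic t`. -/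
lemma ups_subst_Iic {F : Type*} [NormedAddCommGroup F] [NormedSpace ℝ F]
    (G : ℝ → F) (t : ℝ) :
    ∫ s in Iic t, G s = ∫ u in Ioi (0 : ℝ), G (t - u) := by
  have hemb : MeasurableEmbedding (fun s : ℝ => t - s) := by
    have h : (fun s : ℝ => t - s) = fun s => t + (-s) := by ext s; ring
    rw [h]
    exact ((Homeomorph.neg ℝ).trans (Homeomorph.addLeft t)).measurableEmbedding
  have hmap := (Measure.measurePreserving_sub_left (volume : Measure ℝ) t).map_eq
  calc ∫ s in Iic t, G s
      = ∫ s in Iic t, G s ∂(Measure.map (fun s : ℝ => t - s) volume) := by rw [hmap]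
    _ = ∫ u in (fun s : ℝ => t - s) ⁻¹' (Iic t), G (t - u) := hemb.setIntegral_map G (Iic t)
    _ = ∫ u in Ici (0 : ℝ), G (t - u) := by
        congr 1
        ext u
        simp [sub_le_self_iff]
    _ = ∫ u in Ioi (0 : ℝ), G (t - u) := integral_Ici_eq_integral_Ioi

lemma ups_exp_integral {ω : ℝ} (hω : 0 < ω) :
    ∫ u in Ioi (0 : ℝ), Real.exp (-ω * u) = 1 / ω := by
  have h := integral_comp_mul_left_Ioi (fun x => Real.exp (-x)) 0 hω
  simp only [mul_zero] at h
  have h2 : ∀ u : ℝ, Real.exp (-ω * u) = Real.exp (-(ω * u)) := by intro u; ring_nf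
  calc ∫ u in Ioi (0:ℝ), Real.exp (-ω * u)
      = ∫ u in Ioi (0:ℝ), Real.exp (-(ω * u)) := by simp_rw [neg_mul]
    _ = ω⁻¹ • ∫ x in Ioi (0:ℝ), Real.exp (-x) := h
    _ = 1 / ω := by rw [integral_exp_neg_Ioi_zero]; simp [one_div]

variable {m : ℕ} (A : EuclideanSpace ℝ (Fin m) →L[ℝ] EuclideanSpace ℝ (Fin m))
  {K ω : ℝ}

lemma ups_bound_ae
    (hA : ∀ t : ℝ, 0 ≤ t → ‖NormedSpace.exp (t • A)‖ ≤ K * Real.exp (-ω * t))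
    (hK : 0 ≤ K)
    (h : ℝ → EuclideanSpace ℝ (Fin m)) {C : ℝ} (hC : ∀ s, ‖h s‖ ≤ C) (t : ℝ) :
    ∀ᵐ u ∂(volume.restrict (Ioi (0:ℝ))),
      ‖NormedSpace.exp (u • A) (h (t - u))‖ ≤ K * C * Real.exp (-ω * u) := by
  filter_upwards [ae_restrict_mem measurableSet_Ioi] with u hu
  calc ‖NormedSpace.exp (u • A) (h (t - u))‖
      ≤ ‖NormedSpace.exp (u • A)‖ * ‖h (t - u)‖ := ContinuousLinearMap.le_opNorm _ _
    _ ≤ (K * Real.exp (-ω * u)) * C := by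
        apply mul_le_mul (hA u (le_of_lt hu)) (hC _) (norm_nonneg _)
        positivity
    _ = K * C * Real.exp (-ω * u) := by ring

lemma ups_cont_integrand (h : ℝ → EuclideanSpace ℝ (Fin m)) (hh : Continuous h) (t : ℝ) :
    Continuous (fun u : ℝ => NormedSpace.exp (u • A) (h (t - u))) := by
  letI : NormedAlgebra ℚ (EuclideanSpace ℝ (Fin m) →L[ℝ] EuclideanSpace ℝ (Fin m)) :=
    NormedAlgebra.restrictScalars ℚ ℝ _
  have c1 : Continuous fun u : ℝ => NormedSpace.exp (u • A) :=
    NormedSpace.exp_continuous.comp (continuous_id.smul continuous_const)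
  exact c1.clm_apply (hh.comp (continuous_const.sub continuous_id))

lemma ups_integrable
    (hA : ∀ t : ℝ, 0 ≤ t → ‖NormedSpace.exp (t • A)‖ ≤ K * Real.exp (-ω * t))
    (hK : 0 ≤ K) (hω : 0 < ω)
    (h : ℝ → EuclideanSpace ℝ (Fin m)) (hh : Continuous h)
    {C : ℝ} (hC : ∀ s, ‖h s‖ ≤ C) (t : ℝ) :
    IntegrableOn (fun u : ℝ => NormedSpace.exp (u • A) (h (t - u))) (Ioi (0:ℝ)) := by
  apply Integrable.mono' ((exp_neg_integrableOn_Ioi 0 hω).const_mul (K * C))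
  · exact (ups_cont_integrand A h hh t).aestronglyMeasurable
  · exact ups_bound_ae A hA hK h hC t

lemma ups_norm_le
    (hA : ∀ t : ℝ, 0 ≤ t → ‖NormedSpace.exp (t • A)‖ ≤ K * Real.exp (-ω * t))
    (hK : 0 ≤ K) (hω : 0 < ω)
    (h : ℝ → EuclideanSpace ℝ (Fin m))
    {C : ℝ} (hC : ∀ s, ‖h s‖ ≤ C) (t : ℝ) :
    ‖∫ u in Ioi (0:ℝ), NormedSpace.exp (u • A) (h (t - u))‖ ≤ K * C / ω := by
  have hb := norm_integral_le_of_norm_le ((exp_neg_integrableOn_Ioi 0 hω).const_mul (K * C))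
    (ups_bound_ae A hA hK h hC t)
  calc ‖∫ u in Ioi (0:ℝ), NormedSpace.exp (u • A) (h (t - u))‖
      ≤ ∫ u in Ioi (0:ℝ), K * C * Real.exp (-ω * u) := hb
    _ = (K * C) * ∫ u in Ioi (0:ℝ), Real.exp (-ω * u) := integral_const_mul _ _
    _ = K * C / ω := by rw [ups_exp_integral hω]; ring

lemma ups_cont
    (hA : ∀ t : ℝ, 0 ≤ t → ‖NormedSpace.exp (t • A)‖ ≤ K * Real.exp (-ω * t))
    (hK : 0 ≤ K) (hω : 0 < ω)
    (h : ℝ → EuclideanSpace ℝ (Fin m)) (hh : Continuous h)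
    {C : ℝ} (hC : ∀ s, ‖h s‖ ≤ C) :
    Continuous (fun t : ℝ => ∫ u in Ioi (0:ℝ), NormedSpace.exp (u • A) (h (t - u))) := by
  apply continuous_of_dominated
  · exact fun t => (ups_cont_integrand A h hh t).aestronglyMeasurable
  · exact fun t => ups_bound_ae A hA hK h hC t
  · exact (exp_neg_integrableOn_Ioi 0 hω).const_mul (K * C)
  · refine ae_of_all _ fun u => ?_
    exact (NormedSpace.exp (u • A)).continuous.comp (hh.comp (continuous_id.sub continuous_const))

lemma ups_eq_Iic (h : ℝ → EuclideanSpace ℝ (Fin m)) (t : ℝ) :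
    ∫ s in Iic t, NormedSpace.exp ((t - s) • A) (h s)
      = ∫ u in Ioi (0:ℝ), NormedSpace.exp (u • A) (h (t - u)) := by
  rw [ups_subst_Iic (fun s => NormedSpace.exp ((t - s) • A) (h s)) t]
  simp [sub_sub_cancel]

end Aux

/-- Under conditions (C1)-(C3) there exists a unique bounded continuous solution of the
integral equation `φ(t) = ∫_{-∞}^t e^{(t-s)A} [f(φ(s-τ)) + g(s)] ds`, and it satisfies
`sup_t ‖φ(t)‖ ≤ K (M_f + M_g) / ω`. -/
theorem unpredictable_stmt3 {m : ℕ}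
    (A : EuclideanSpace ℝ (Fin m) →L[ℝ] EuclideanSpace ℝ (Fin m))
    (f : EuclideanSpace ℝ (Fin m) → EuclideanSpace ℝ (Fin m))
    (g : ℝ → EuclideanSpace ℝ (Fin m))
    (Mf Lf Mg K ω τ : ℝ)
    (hMf : ∀ x, ‖f x‖ ≤ Mf)
    (hLf : ∀ x y, ‖f x - f y‖ ≤ Lf * ‖x - y‖)
    (hgc : Continuous g) (hMg : ∀ t, ‖g t‖ ≤ Mg)
    (hK : 1 ≤ K) (hω : 0 < ω) (hτ : 0 < τ)
    (hC3 : 0 < ω - 2 * K * Lf * Real.exp (ω * τ / 2))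
    (hA : ∀ t : ℝ, 0 ≤ t → ‖NormedSpace.exp (t • A)‖ ≤ K * Real.exp (-ω * t)) :
    ∃ φ : ℝ → EuclideanSpace ℝ (Fin m),
      Continuous φ ∧ (∃ C, ∀ t, ‖φ t‖ ≤ C) ∧
      (∀ t, φ t = ∫ s in Set.Iic t,
        NormedSpace.exp ((t - s) • A) (f (φ (s - τ)) + g s)) ∧
      (∀ t, ‖φ t‖ ≤ K * (Mf + Mg) / ω) ∧
      (∀ ψ : ℝ → EuclideanSpace ℝ (Fin m), Continuous ψ → (∃ C, ∀ t, ‖ψ t‖ ≤ C) →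
        (∀ t, ψ t = ∫ s in Set.Iic t,
          NormedSpace.exp ((t - s) • A) (f (ψ (s - τ)) + g s)) → ψ = φ) := by
  classical
  have hMf0 : 0 ≤ Mf := le_trans (norm_nonneg _) (hMf 0)
  have hMg0 : 0 ≤ Mg := le_trans (norm_nonneg _) (hMg 0)
  have hK0 : 0 ≤ K := le_trans zero_le_one hK
  set Lf' : ℝ := max Lf 0 with hLf'def
  have hLf'0 : 0 ≤ Lf' := le_max_right _ _
  have hLf' : ∀ x y, ‖f x - f y‖ ≤ Lf' * ‖x - y‖ := fun x y =>
    (hLf x y).trans (mul_le_mul_of_nonneg_right (le_max_left _ _) (norm_nonneg _))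
  have hfc : Continuous f := by
    have hl : LipschitzWith ⟨Lf', hLf'0⟩ f := LipschitzWith.of_dist_le_mul fun x y => by
      rw [dist_eq_norm, dist_eq_norm]; exact hLf' x y
    exact hl.continuous
  have hcontr : K * Lf' / ω < 1 := by
    rw [div_lt_one hω]
    have hexp : 1 ≤ Real.exp (ω * τ / 2) := Real.one_le_exp (by positivity)
    rcases le_or_gt Lf 0 with h | h
    · have hz : Lf' = 0 := max_eq_right h
      rw [hz]; simpa using hω
    · have hz : Lf' = Lf := max_eq_left h.le
      rw [hz]
      nlinarith [mul_nonneg hK0 h.le]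
  let H : (ℝ →ᵇ EuclideanSpace ℝ (Fin m)) → ℝ → EuclideanSpace ℝ (Fin m) := fun φ s => f (φ (s - τ)) + g s
  have hhc : ∀ φ : ℝ →ᵇ EuclideanSpace ℝ (Fin m), Continuous (H φ) := fun φ =>
    (hfc.comp (φ.continuous.comp (continuous_id.sub continuous_const))).add hgc
  have hhb : ∀ (φ : ℝ →ᵇ EuclideanSpace ℝ (Fin m)) (s : ℝ), ‖H φ s‖ ≤ Mf + Mg := fun φ s =>
    (norm_add_le _ _).trans (add_le_add (hMf _) (hMg _))
  let Φ : (ℝ →ᵇ EuclideanSpace ℝ (Fin m)) → (ℝ →ᵇ EuclideanSpace ℝ (Fin m)) := fun φ =>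
    BoundedContinuousFunction.ofNormedAddCommGroup
      (fun t => ∫ u in Set.Ioi (0:ℝ), NormedSpace.exp (u • A) (H φ (t - u)))
      (ups_cont A hA hK0 hω (H φ) (hhc φ) (hhb φ))
      (K * (Mf + Mg) / ω)
      (ups_norm_le A hA hK0 hω (H φ) (hhb φ))
  have hΦapp : ∀ (φ : ℝ →ᵇ EuclideanSpace ℝ (Fin m)) (t : ℝ),
      Φ φ t = ∫ u in Set.Ioi (0:ℝ), NormedSpace.exp (u • A) (H φ (t - u)) := fun φ t => rfl
  set c : NNReal := ⟨K * Lf' / ω, by positivity⟩ with hc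
  have hΦlip : LipschitzWith c Φ := by
    apply LipschitzWith.of_dist_le_mul
    intro φ ψ
    have hd0 : 0 ≤ (K * Lf' / ω) * dist φ ψ := by positivity
    show dist (Φ φ) (Φ ψ) ≤ (K * Lf' / ω) * dist φ ψ
    rw [BoundedContinuousFunction.dist_le hd0]
    intro t
    rw [dist_eq_norm]
    have hint1 := ups_integrable A hA hK0 hω (H φ) (hhc φ) (hhb φ) t
    have hint2 := ups_integrable A hA hK0 hω (H ψ) (hhc ψ) (hhb ψ) t
    have hsub : Φ φ t - Φ ψ t = ∫ u in Set.Ioi (0:ℝ),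
        NormedSpace.exp (u • A) (f (φ (t - u - τ)) - f (ψ (t - u - τ))) := by
      rw [hΦapp, hΦapp, ← integral_sub hint1 hint2]
      congr 1
      funext u
      rw [← map_sub]
      congr 1
      show (f (φ (t - u - τ)) + g (t - u)) - (f (ψ (t - u - τ)) + g (t - u)) = _
      abel
    rw [hsub]
    have hb : ∀ᵐ u ∂(volume.restrict (Set.Ioi (0:ℝ))),
        ‖NormedSpace.exp (u • A) (f (φ (t - u - τ)) - f (ψ (t - u - τ)))‖
          ≤ (K * (Lf' * dist φ ψ)) * Real.exp (-ω * u) := by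
      filter_upwards [ae_restrict_mem measurableSet_Ioi] with u hu
      have hdist : ‖f (φ (t - u - τ)) - f (ψ (t - u - τ))‖ ≤ Lf' * dist φ ψ := by
        refine (hLf' _ _).trans (mul_le_mul_of_nonneg_left ?_ hLf'0)
        rw [← dist_eq_norm]
        exact BoundedContinuousFunction.dist_coe_le_dist _
      calc ‖NormedSpace.exp (u • A) (f (φ (t - u - τ)) - f (ψ (t - u - τ)))‖
          ≤ ‖NormedSpace.exp (u • A)‖ * ‖f (φ (t - u - τ)) - f (ψ (t - u - τ))‖ :=
            ContinuousLinearMap.le_opNorm _ _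
        _ ≤ (K * Real.exp (-ω * u)) * (Lf' * dist φ ψ) := by
            apply mul_le_mul (hA u (le_of_lt hu)) hdist (norm_nonneg _)
            positivity
        _ = (K * (Lf' * dist φ ψ)) * Real.exp (-ω * u) := by ring
    have hni := norm_integral_le_of_norm_le
      ((exp_neg_integrableOn_Ioi 0 hω).const_mul (K * (Lf' * dist φ ψ))) hb
    calc ‖∫ u in Set.Ioi (0:ℝ),
            NormedSpace.exp (u • A) (f (φ (t - u - τ)) - f (ψ (t - u - τ)))‖
        ≤ ∫ u in Set.Ioi (0:ℝ), (K * (Lf' * dist φ ψ)) * Real.exp (-ω * u) := hni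
      _ = (K * (Lf' * dist φ ψ)) * ∫ u in Set.Ioi (0:ℝ), Real.exp (-ω * u) :=
          integral_const_mul _ _
      _ = (K * Lf' / ω) * dist φ ψ := by rw [ups_exp_integral hω]; ring
  have hcw : ContractingWith c Φ := ⟨by rwa [← NNReal.coe_lt_one], hΦlip⟩
  let φ₀ : ℝ →ᵇ EuclideanSpace ℝ (Fin m) := hcw.fixedPoint Φ
  have hfix : Φ φ₀ = φ₀ := hcw.fixedPoint_isFixedPt
  have heq : ∀ t, φ₀ t = ∫ s in Set.Iic t,
      NormedSpace.exp ((t - s) • A) (f (φ₀ (s - τ)) + g s) := by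
    intro t
    calc φ₀ t = Φ φ₀ t := by rw [hfix]
      _ = ∫ u in Set.Ioi (0:ℝ), NormedSpace.exp (u • A) (H φ₀ (t - u)) := hΦapp φ₀ t
      _ = ∫ s in Set.Iic t, NormedSpace.exp ((t - s) • A) (H φ₀ s) :=
          (ups_eq_Iic A (H φ₀) t).symm
  refine ⟨⇑φ₀, φ₀.continuous, ⟨‖φ₀‖, fun t => φ₀.norm_coe_le_norm t⟩, heq, ?_, ?_⟩
  · intro t
    calc ‖φ₀ t‖ = ‖Φ φ₀ t‖ := by rw [hfix]
      _ ≤ K * (Mf + Mg) / ω := by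
          rw [hΦapp]
          exact ups_norm_le A hA hK0 hω (H φ₀) (hhb φ₀) t
  · intro ψ hψc hψb hψeq
    obtain ⟨C, hC⟩ := hψb
    let ψb : ℝ →ᵇ EuclideanSpace ℝ (Fin m) := BoundedContinuousFunction.ofNormedAddCommGroup ψ hψc C hC
    have hfixψ : Function.IsFixedPt Φ ψb := by
      refine BoundedContinuousFunction.ext fun t => ?_
      show (∫ u in Set.Ioi (0:ℝ), NormedSpace.exp (u • A) (H ψb (t - u))) = ψ t
      rw [← ups_eq_Iic A (H ψb) t]
      exact (hψeq t).symm
    have hψφ : ψb = φ₀ := hcw.fixedPoint_unique hfixψ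
    funext t
    exact congrFun (congrArg (fun F : ℝ →ᵇ EuclideanSpace ℝ (Fin m) => ⇑F) hψφ) t
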